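/- Let 𝒳 = ℝ with the Euclidean metric. For every stochastic process 𝕏 on ℝ satisfying condition SMV, the nearest neighbor learning rule is consistent for the target f* = 𝟙_A for every set A ⊆ ℝ that is a finite union of intervals: L_𝕏(NN, 𝟙_A; T) → 0 almost surely as T → ∞. (The paper states this for all 𝕏 ∈ SUOL for binary classification, every such process satisfying SMV by prior work.) -/

import Mathlib

open MeasureTheory Filter Topology

/-- The nearest neighbor representant index: for `t ≥ 1`, `nnIdx x t` is the smallest
`s < t` minimizing `dist (x t) (x s)` (ties broken in favor of the smallest index);
for `t = 0` it is `0` by convention. -/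
noncomputable def nnIdx {X : Type} [MetricSpace X] (x : ℕ → X) (t : ℕ) : ℕ :=
  letI := Classical.propDecidable
  if h : ∃ s, s < t ∧ ∀ u, u < t → dist (x t) (x s) ≤ dist (x t) (x u) then
    Nat.find h
  else 0

/-- The average number of mistakes of the nearest neighbor rule on the binary
target `𝟙_A` along the sequence `x`, up to horizon `T`. -/
noncomputable def nnAvgLoss {X : Type} [MetricSpace X] (x : ℕ → X) (A : Set X)
    (T : ℕ) : ℝ :=
  (T : ℝ)⁻¹ * ∑ t ∈ Finset.range T,
    |A.indicator (fun _ => (1 : ℝ)) (x (nnIdx x t)) -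
      A.indicator (fun _ => (1 : ℝ)) (x t)|

/-- Condition SMV (sublinear measurable visits): for every countable measurable
partition of the instance space, the number of cells visited by the first `T` points
of the process is `o(T)` almost surely. -/
def SMV {Ω X : Type} [MeasurableSpace Ω] [MeasurableSpace X] (μ : Measure Ω)
    (Xp : ℕ → Ω → X) : Prop :=
  ∀ A : ℕ → Set X, (∀ k, MeasurableSet (A k)) →
    Pairwise (Function.onFun Disjoint A) → (⋃ k, A k) = Set.univ →
    ∀ᵐ ω ∂μ, Tendsto
      (fun T : ℕ => (Set.ncard {k : ℕ | ∃ t, t < T ∧ Xp t ω ∈ A k} : ℝ) / T)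
      atTop (𝓝 0)

/-- For every stochastic process on `ℝ` satisfying condition SMV,
the nearest neighbor rule is consistent on the indicator of any finite union of
intervals. -/
noncomputable def cellO (b : ℝ) : Option (ℤ ⊕ ℤ) → Set ℝ
  | none => {b}
  | some (.inl j) => Set.Ico (b + 2^j) (b + 2^(j+1))
  | some (.inr j) => Set.Ioc (b - 2^(j+1)) (b - 2^j)

noncomputable def kO (b y : ℝ) : Option (ℤ ⊕ ℤ) :=
  if b < y then some (.inl (Int.log 2 (y - b)))
  else if y < b then some (.inr (Int.log 2 (b - y)))
  else none

lemma two_cast : ((2:ℕ):ℝ) = 2 := by norm_num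

lemma mem_cell_kO (b y : ℝ) : y ∈ cellO b (kO b y) := by
  unfold kO
  rcases lt_trichotomy y b with h | h | h
  · rw [if_neg (by linarith), if_pos h]
    have h1 : (2:ℝ)^(Int.log 2 (b - y)) ≤ b - y := by
      have := Int.zpow_log_le_self (b := 2) (r := b - y) one_lt_two (by linarith)
      simpa [two_cast] using this
    have h2 : b - y < (2:ℝ)^(Int.log 2 (b - y) + 1) := by
      have := Int.lt_zpow_succ_log_self (b := 2) one_lt_two (b - y)
      simpa [two_cast] using this
    exact ⟨by linarith, by linarith⟩
  · simp [if_neg, h, cellO, lt_irrefl]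
  · rw [if_pos h]
    have h1 : (2:ℝ)^(Int.log 2 (y - b)) ≤ y - b := by
      have := Int.zpow_log_le_self (b := 2) (r := y - b) one_lt_two (by linarith)
      simpa [two_cast] using this
    have h2 : y - b < (2:ℝ)^(Int.log 2 (y - b) + 1) := by
      have := Int.lt_zpow_succ_log_self (b := 2) one_lt_two (y - b)
      simpa [two_cast] using this
    exact ⟨by linarith, by linarith⟩

lemma cell_inl_mem {b y : ℝ} {j : ℤ} (h : y ∈ cellO b (some (.inl j))) :
    (2:ℝ)^j ≤ y - b ∧ y - b < 2^(j+1) := by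
  obtain ⟨h1, h2⟩ := h; constructor <;> linarith

lemma cell_inr_mem {b y : ℝ} {j : ℤ} (h : y ∈ cellO b (some (.inr j))) :
    (2:ℝ)^j ≤ b - y ∧ b - y < 2^(j+1) := by
  obtain ⟨h1, h2⟩ := h; constructor <;> linarith

lemma cellO_disjoint (b : ℝ) : Pairwise (Function.onFun Disjoint (cellO b)) := by
  have hmono : ∀ j j' : ℤ, j < j' → (2:ℝ)^(j+1) ≤ 2^j' := fun j j' h =>
    zpow_le_zpow_right₀ one_le_two (by omega)
  intro k k' hne
  rw [Function.onFun, Set.disjoint_left]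
  intro y hy hy'
  match k, k' with
  | none, none => exact hne rfl
  | none, some (.inl j) =>
      have := cell_inl_mem hy'
      have : (0:ℝ) < 2^j := by positivity
      rcases hy with rfl; have := cell_inl_mem hy'; linarith
  | none, some (.inr j) =>
      rcases hy with rfl; have := cell_inr_mem hy'
      have : (0:ℝ) < 2^j := by positivity
      linarith
  | some (.inl j), none =>
      rcases hy' with rfl; have := cell_inl_mem hy
      have : (0:ℝ) < 2^j := by positivity
      linarith
  | some (.inr j), none =>
      rcases hy' with rfl; have := cell_inr_mem hy
      have : (0:ℝ) < 2^j := by positivity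
      linarith
  | some (.inl j), some (.inl j') =>
      have h1 := cell_inl_mem hy
      have h2 := cell_inl_mem hy'
      rcases lt_trichotomy j j' with h | h | h
      · have := hmono j j' h; linarith
      · exact hne (by rw [h])
      · have := hmono j' j h; linarith
  | some (.inl j), some (.inr j') =>
      have h1 := cell_inl_mem hy
      have h2 := cell_inr_mem hy'
      have p1 : (0:ℝ) < 2^j := by positivity
      have p2 : (0:ℝ) < 2^j' := by positivity
      linarith
  | some (.inr j), some (.inl j') =>
      have h1 := cell_inr_mem hy
      have h2 := cell_inl_mem hy'
      have p1 : (0:ℝ) < 2^j := by positivity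
      have p2 : (0:ℝ) < 2^j' := by positivity
      linarith
  | some (.inr j), some (.inr j') =>
      have h1 := cell_inr_mem hy
      have h2 := cell_inr_mem hy'
      rcases lt_trichotomy j j' with h | h | h
      · have := hmono j j' h; linarith
      · exact hne (by rw [h])
      · have := hmono j' j h; linarith

lemma cellO_measurable (b : ℝ) (k : Option (ℤ ⊕ ℤ)) : MeasurableSet (cellO b k) := by
  match k with
  | none => exact measurableSet_singleton b
  | some (.inl j) => exact measurableSet_Ico
  | some (.inr j) => exact measurableSet_Ioc

noncomputable def eIdx : Option (ℤ ⊕ ℤ) ≃ ℕ := Denumerable.eqv (Option (ℤ ⊕ ℤ))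

noncomputable def part (b : ℝ) (k : ℕ) : Set ℝ := cellO b (eIdx.symm k)

noncomputable def kN (b y : ℝ) : ℕ := eIdx (kO b y)

lemma mem_part_kN (b y : ℝ) : y ∈ part b (kN b y) := by
  simp only [part, kN, Equiv.symm_apply_apply]; exact mem_cell_kO b y

lemma part_disjoint (b : ℝ) : Pairwise (Function.onFun Disjoint (part b)) :=
  fun k k' hne => cellO_disjoint b (fun h => hne (by simpa using congrArg eIdx h))

lemma part_unique {b y : ℝ} {k : ℕ} (h : y ∈ part b k) : k = kN b y := by
  by_contra hne
  exact Set.disjoint_left.mp (part_disjoint b hne) h (mem_part_kN b y)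

lemma part_union (b : ℝ) : (⋃ k, part b k) = Set.univ := by
  ext y; simp only [Set.mem_iUnion, Set.mem_univ, iff_true]
  exact ⟨kN b y, mem_part_kN b y⟩
lemma nnIdx_exists {X : Type} [MetricSpace X] (x : ℕ → X) {t : ℕ} (ht : 0 < t) :
    ∃ s, s < t ∧ ∀ u, u < t → dist (x t) (x s) ≤ dist (x t) (x u) := by
  obtain ⟨s, hs, hmin⟩ := Finset.exists_min_image (Finset.range t)
    (fun s => dist (x t) (x s)) ⟨0, Finset.mem_range.mpr ht⟩
  exact ⟨s, Finset.mem_range.mp hs, fun u hu => hmin u (Finset.mem_range.mpr hu)⟩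

lemma find_irrel {p : ℕ → Prop} (i1 i2 : DecidablePred p) (h : ∃ n, p n) :
    @Nat.find p i1 h = @Nat.find p i2 h := by
  rw [Subsingleton.elim i1 i2]

lemma nnIdx_spec {X : Type} [MetricSpace X] (x : ℕ → X) {t : ℕ} (ht : 0 < t) :
    nnIdx x t < t ∧ ∀ u, u < t → dist (x t) (x (nnIdx x t)) ≤ dist (x t) (x u) := by
  have h := nnIdx_exists x ht
  rw [nnIdx, dif_pos h]
  have hs := Nat.find_spec (H := h)
  rwa [find_irrel _ _ h] at hs

lemma nnIdx_zero {X : Type} [MetricSpace X] (x : ℕ → X) : nnIdx x 0 = 0 := by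
  rw [nnIdx, dif_neg]
  rintro ⟨s, hs, -⟩; omega

lemma exists_boundary {n : ℕ} (I : Fin n → Set ℝ) (hI : ∀ i, (I i).OrdConnected) :
    ∃ B : Finset ℝ, ∀ u v : ℝ, u ∈ (⋃ i, I i) → v ∉ (⋃ i, I i) →
      ∃ b ∈ B, b ∈ Set.uIcc u v := by
  classical
  refine ⟨(Finset.univ.image fun i => sInf (I i)) ∪ (Finset.univ.image fun i => sSup (I i)),
    fun u v hu hv => ?_⟩
  obtain ⟨i, hui⟩ := Set.mem_iUnion.mp hu
  have hvi : v ∉ I i := fun h => hv (Set.mem_iUnion.mpr ⟨i, h⟩)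
  rcases lt_trichotomy u v with h | h | h
  · refine ⟨sSup (I i), Finset.mem_union_right _ (Finset.mem_image.mpr ⟨i, Finset.mem_univ i, rfl⟩), ?_⟩
    have hbdd : BddAbove (I i) := by
      by_contra hb
      obtain ⟨z, hz, hvz⟩ := not_bddAbove_iff.mp hb v
      exact hvi ((hI i).out hui hz ⟨h.le, hvz.le⟩)
    have h1 : u ≤ sSup (I i) := le_csSup hbdd hui
    have h2 : sSup (I i) ≤ v := by
      by_contra h2
      obtain ⟨z, hz, hvz⟩ := exists_lt_of_lt_csSup ⟨u, hui⟩ (not_le.mp h2)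
      exact hvi ((hI i).out hui hz ⟨h.le, hvz.le⟩)
    exact Set.mem_uIcc.mpr (Or.inl ⟨h1, h2⟩)
  · exact absurd (h ▸ hui) hvi
  · refine ⟨sInf (I i), Finset.mem_union_left _ (Finset.mem_image.mpr ⟨i, Finset.mem_univ i, rfl⟩), ?_⟩
    have hbdd : BddBelow (I i) := by
      by_contra hb
      obtain ⟨z, hz, hvz⟩ := not_bddBelow_iff.mp hb v
      exact hvi ((hI i).out hz hui ⟨hvz.le, h.le⟩)
    have h1 : sInf (I i) ≤ u := csInf_le hbdd hui
    have h2 : v ≤ sInf (I i) := by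
      by_contra h2
      obtain ⟨z, hz, hvz⟩ := exists_lt_of_csInf_lt ⟨u, hui⟩ (not_le.mp h2)
      exact hvi ((hI i).out hz hui ⟨hvz.le, h.le⟩)
    exact Set.mem_uIcc.mpr (Or.inr ⟨h2, h1⟩)

lemma mistakes_bound (x : ℕ → ℝ) (A : Set ℝ) (B : Finset ℝ)
    (hB : ∀ u v : ℝ, u ∈ A → v ∉ A → ∃ b ∈ B, b ∈ Set.uIcc u v) (T : ℕ) :
    nnAvgLoss x A T ≤ ∑ b ∈ B, (((Finset.range T).image fun s => kN b (x s)).card : ℝ) / T := by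
  classical
  set Mk : ℕ → Prop := fun t => ¬ (x (nnIdx x t) ∈ A ↔ x t ∈ A) with hMk
  -- Step A : average loss as number of mistakes
  have stepA : nnAvgLoss x A T = (((Finset.range T).filter Mk).card : ℝ) / T := by
    have hterm : ∀ t, |A.indicator (fun _ => (1:ℝ)) (x (nnIdx x t)) -
        A.indicator (fun _ => (1:ℝ)) (x t)| = if Mk t then 1 else 0 := by
      intro t
      by_cases h1 : x (nnIdx x t) ∈ A <;> by_cases h2 : x t ∈ A <;>
        simp [hMk, Set.indicator_of_mem, Set.indicator_of_notMem, h1, h2]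
    rw [nnAvgLoss, inv_mul_eq_div]
    congr 1
    rw [Finset.sum_congr rfl fun t _ => hterm t]
    rw [Finset.sum_boole]
  -- mistakes only at positive times
  have hMk0 : ¬ Mk 0 := by simp [hMk, nnIdx_zero]
  -- Step C : boundary assignment
  have hchoice : ∀ t, Mk t → ∃ b ∈ B, b ∈ Set.uIcc (x t) (x (nnIdx x t)) := by
    intro t hm
    by_cases h2 : x t ∈ A
    · have h1 : x (nnIdx x t) ∉ A := fun h => hm ⟨fun _ => h2, fun _ => h⟩
      exact hB (x t) (x (nnIdx x t)) h2 h1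
    · have h1 : x (nnIdx x t) ∈ A := by
        by_contra h
        exact hm ⟨fun hh => absurd hh h, fun hh => absurd hh h2⟩
      obtain ⟨b, hbB, hb⟩ := hB (x (nnIdx x t)) (x t) h1 h2
      exact ⟨b, hbB, Set.uIcc_comm (x (nnIdx x t)) (x t) ▸ hb⟩
  set β : ℕ → ℝ := fun t =>
    if h : ∃ b ∈ B, b ∈ Set.uIcc (x t) (x (nnIdx x t)) then h.choose else 0 with hβdef
  have hβ : ∀ t, Mk t → β t ∈ B ∧ β t ∈ Set.uIcc (x t) (x (nnIdx x t)) := by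
    intro t hm
    have h := hchoice t hm
    simp only [hβdef, dif_pos h]
    exact ⟨h.choose_spec.1, h.choose_spec.2⟩
  -- Step D : subset of biUnion
  have stepD : (Finset.range T).filter Mk ⊆
      B.biUnion (fun b => (Finset.range T).filter (fun t => Mk t ∧ β t = b)) := by
    intro t ht
    rw [Finset.mem_filter] at ht
    exact Finset.mem_biUnion.mpr ⟨β t, (hβ t ht.2).1,
      Finset.mem_filter.mpr ⟨ht.1, ht.2, rfl⟩⟩
  -- Step E : per-boundary injection into visited cells
  have stepE : ∀ b ∈ B, ((Finset.range T).filter (fun t => Mk t ∧ β t = b)).card ≤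
      ((Finset.range T).image fun s => kN b (x s)).card := by
    intro b _
    apply Finset.card_le_card_of_injOn (fun t => kN b (x t))
    · intro t ht
      rw [Finset.mem_coe, Finset.mem_filter] at ht
      exact Finset.mem_image.mpr ⟨t, ht.1, rfl⟩
    · -- injectivity
      have key : ∀ t t', t' < t → Mk t → Mk t' → β t = b → β t' = b →
          kN b (x t) = kN b (x t') → False := by
        intro t t' htt' hmt hmt' hbt hbt' hkeq
        have ht : 0 < t := Nat.lt_of_le_of_lt (Nat.zero_le t') htt'
        obtain ⟨hφlt, hmin⟩ := nnIdx_spec x ht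
        have hbu : b ∈ Set.uIcc (x t) (x (nnIdx x t)) := hbt ▸ (hβ t hmt).2
        have hdb : dist (x t) b ≤ dist (x t) (x (nnIdx x t)) :=
          Real.dist_left_le_of_mem_uIcc hbu
        have hmin' : dist (x t) (x (nnIdx x t)) ≤ dist (x t) (x t') := hmin t' htt'
        have hko : kO b (x t) = kO b (x t') := eIdx.injective hkeq
        have m1 : x t ∈ cellO b (kO b (x t)) := mem_cell_kO b (x t)
        have m2 : x t' ∈ cellO b (kO b (x t)) := by rw [hko]; exact mem_cell_kO b (x t')
        rcases h0 : kO b (x t) with _ | (j | j)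
        · rw [h0] at m1 m2
          have e1 : x t = b := m1
          have e2 : x t' = b := m2
          have hle : dist (x t) (x (nnIdx x t)) ≤ 0 := by
            refine le_trans hmin' ?_
            rw [Real.dist_eq, e1, e2]; simp
          have heq2 : x t = x (nnIdx x t) :=
            dist_eq_zero.mp (le_antisymm hle dist_nonneg)
          exact hmt (by rw [← heq2])
        · rw [h0] at m1 m2
          obtain ⟨l1, r1⟩ := cell_inl_mem m1
          obtain ⟨l2, r2⟩ := cell_inl_mem m2
          have h2j : (2:ℝ)^(j+1) = 2^j * 2 := zpow_add_one₀ two_ne_zero j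
          have hd1 : (2:ℝ)^j ≤ dist (x t) b := by
            rw [Real.dist_eq]; exact le_trans l1 (le_abs_self _)
          have hd2 : dist (x t) (x t') < 2^j := by
            rw [Real.dist_eq, abs_sub_lt_iff]
            constructor <;> linarith
          linarith
        · rw [h0] at m1 m2
          obtain ⟨l1, r1⟩ := cell_inr_mem m1
          obtain ⟨l2, r2⟩ := cell_inr_mem m2
          have h2j : (2:ℝ)^(j+1) = 2^j * 2 := zpow_add_one₀ two_ne_zero j
          have hd1 : (2:ℝ)^j ≤ dist (x t) b := by
            rw [Real.dist_eq, abs_sub_comm]; exact le_trans l1 (le_abs_self _)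
          have hd2 : dist (x t) (x t') < 2^j := by
            rw [Real.dist_eq, abs_sub_lt_iff]
            constructor <;> linarith
          linarith
      intro t ht t' ht' heq
      rw [Finset.mem_coe, Finset.mem_filter] at ht ht'
      rcases lt_trichotomy t t' with h | h | h
      · exact (key t' t h ht'.2.1 ht.2.1 ht'.2.2 ht.2.2 heq.symm).elim
      · exact h
      · exact (key t t' h ht.2.1 ht'.2.1 ht.2.2 ht'.2.2 heq).elim
  -- assemble
  have cardle : (((Finset.range T).filter Mk).card : ℝ) ≤
      ∑ b ∈ B, (((Finset.range T).image fun s => kN b (x s)).card : ℝ) := by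
    have h1 := Finset.card_le_card stepD
    have h2 := Finset.card_biUnion_le (s := B)
      (t := fun b => (Finset.range T).filter (fun t => Mk t ∧ β t = b))
    have h3 : ∑ b ∈ B, ((Finset.range T).filter (fun t => Mk t ∧ β t = b)).card ≤
        ∑ b ∈ B, ((Finset.range T).image fun s => kN b (x s)).card :=
      Finset.sum_le_sum stepE
    calc (((Finset.range T).filter Mk).card : ℝ)
        ≤ ((B.biUnion fun b => (Finset.range T).filter (fun t => Mk t ∧ β t = b)).card : ℝ) := by
          exact_mod_cast h1
      _ ≤ _ := by exact_mod_cast le_trans h2 h3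
  rw [stepA, ← Finset.sum_div]
  rcases Nat.eq_zero_or_pos T with rfl | hT
  · simp
  · gcongr

lemma visited_eq (b : ℝ) (x : ℕ → ℝ) (T : ℕ) :
    {k : ℕ | ∃ t, t < T ∧ x t ∈ part b k} =
      ↑((Finset.range T).image fun s => kN b (x s)) := by
  ext k
  simp only [Set.mem_setOf_eq, Finset.coe_image, Set.mem_image, Finset.mem_coe,
    Finset.mem_range]
  constructor
  · rintro ⟨t, ht, hm⟩
    exact ⟨t, ht, (part_unique hm).symm⟩
  · rintro ⟨t, ht, rfl⟩
    exact ⟨t, ht, mem_part_kN b (x t)⟩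

theorem nn_consistent_finite_union_of_intervals
    {Ω : Type} [MeasurableSpace Ω] (μ : Measure Ω) [IsProbabilityMeasure μ]
    (Xp : ℕ → Ω → ℝ) (hX : ∀ t, Measurable (Xp t)) (hSMV : SMV μ Xp)
    (n : ℕ) (I : Fin n → Set ℝ) (hI : ∀ i, (I i).OrdConnected) :
    ∀ᵐ ω ∂μ, Tendsto (fun T => nnAvgLoss (fun t => Xp t ω) (⋃ i, I i) T)
      atTop (𝓝 0) := by
  obtain ⟨B, hB⟩ := exists_boundary I hI
  have H : ∀ᵐ ω ∂μ, ∀ b ∈ (B : Set ℝ), Tendsto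
      (fun T : ℕ => (Set.ncard {k : ℕ | ∃ t, t < T ∧ Xp t ω ∈ part b k} : ℝ) / T)
      atTop (𝓝 0) := by
    rw [ae_ball_iff B.countable_toSet]
    intro b _
    exact hSMV (part b) (fun k => cellO_measurable b _) (part_disjoint b) (part_union b)
  filter_upwards [H] with ω hω
  set x : ℕ → ℝ := fun t => Xp t ω with hx
  have hub : ∀ T : ℕ, nnAvgLoss x (⋃ i, I i) T ≤
      ∑ b ∈ B, (Set.ncard {k : ℕ | ∃ t, t < T ∧ x t ∈ part b k} : ℝ) / T := by
    intro T
    have := mistakes_bound x (⋃ i, I i) B hB T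
    refine this.trans_eq (Finset.sum_congr rfl fun b _ => ?_)
    rw [visited_eq b x T, Set.ncard_coe_finset]
  have hlb : ∀ T : ℕ, (0:ℝ) ≤ nnAvgLoss x (⋃ i, I i) T := by
    intro T
    rw [nnAvgLoss]
    positivity
  have hupper : Tendsto (fun T : ℕ => ∑ b ∈ B,
      (Set.ncard {k : ℕ | ∃ t, t < T ∧ x t ∈ part b k} : ℝ) / T) atTop (𝓝 0) := by
    have := tendsto_finset_sum B (fun b hb => hω b (Finset.mem_coe.mpr hb))
    simpa using this
  exact tendsto_of_tendsto_of_tendsto_of_le_of_le tendsto_const_nhds hupper hlb hub
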